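/- arXiv:2212.04929 — 2 statements merged into one kernel-verified Lean document; each statement's English description precedes it below -/
import Mathlib

section
/- There exists a convex function f ∈ 𝒞 and an integer n ≥ 10 such that the inverse coefficient A_n of f satisfies |A_n| > 1. (In fact for every n ≥ 10 such a function exists.) -/
open Complex Metric

/-- The quantity `1 + z f''(z)/f'(z)`. -/
noncomputable def convexQuot (f : ℂ → ℂ) (z : ℂ) : ℂ :=
  1 + z * deriv (deriv f) z / deriv f z

/-- `f` is analytic on the unit disk with `f(0) = 0` and `f'(0) = 1`. -/
def IsNormalizedAnalytic (f : ℂ → ℂ) : Prop :=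
  DifferentiableOn ℂ f (ball 0 1) ∧ f 0 = 0 ∧ deriv f 0 = 1

/-- `a` is the sequence of Taylor coefficients of `f` at `0` (normalized). -/
def HasCoeffs (f : ℂ → ℂ) (a : ℕ → ℂ) : Prop :=
  (∀ z ∈ ball (0 : ℂ) 1, HasSum (fun n : ℕ => a n * z ^ n) (f z)) ∧ a 0 = 0 ∧ a 1 = 1

/-- `f` is convex of order `α`: `Re(1 + z f''/f') > α` on the unit disk. -/
def IsConvexOfOrder (α : ℝ) (f : ℂ → ℂ) : Prop :=
  IsNormalizedAnalytic f ∧ ∀ z ∈ ball (0 : ℂ) 1, α < (convexQuot f z).re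

/-- `f` is convex: `Re(1 + z f''/f') > 0` on the unit disk. -/
def IsConvex (f : ℂ → ℂ) : Prop := IsConvexOfOrder 0 f

/-- `f` is strongly convex of order `β`: `|arg(1 + z f''/f')| ≤ βπ/2` on the unit disk. -/
def IsStronglyConvex (β : ℝ) (f : ℂ → ℂ) : Prop :=
  IsNormalizedAnalytic f ∧
    ∀ z ∈ ball (0 : ℂ) 1, |Complex.arg (convexQuot f z)| ≤ β * Real.pi / 2

/-- `g` is an inverse of `f` near `0`, with Taylor coefficients `A` on `|w| < r`. -/
def IsInverseWithCoeffs (f g : ℂ → ℂ) (A : ℕ → ℂ) (r : ℝ) : Prop :=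
  0 < r ∧ (∀ w ∈ ball (0 : ℂ) r, g w ∈ ball (0 : ℂ) 1 ∧ f (g w) = w) ∧
    (∀ w ∈ ball (0 : ℂ) r, HasSum (fun n : ℕ => A n * w ^ n) (g w)) ∧ A 0 = 0 ∧ A 1 = 1

/-- `1 + z f''/f'` is subordinate to `p` on the unit disk. -/
def ConvexQuotSubord (f : ℂ → ℂ) (p : ℂ → ℂ) : Prop :=
  ∃ ω : ℂ → ℂ, DifferentiableOn ℂ ω (ball 0 1) ∧ ω 0 = 0 ∧
    (∀ z ∈ ball (0 : ℂ) 1, ω z ∈ ball (0 : ℂ) 1) ∧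
    ∀ z ∈ ball (0 : ℂ) 1, convexQuot f z = p (ω z)

/-- The class `𝒞_E` of convex functions associated with the exponential. -/
def MemCE (f : ℂ → ℂ) : Prop := IsNormalizedAnalytic f ∧ ConvexQuotSubord f Complex.exp

/-- The class `𝒞_{SG}` of convex functions associated with the modified sigmoid. -/
def MemCSG (f : ℂ → ℂ) : Prop :=
  IsNormalizedAnalytic f ∧ ConvexQuotSubord f (fun w => 2 / (1 + Complex.exp (-w)))

namespace KSconv

open Finset Topology




/-- Taylor coefficients of the inverse of the sector map, defined by the recurrence coming
from the ODE `(1 + (9/5) w) g' = 1 - g ^ 2`. -/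
def q : ℕ → ℚ
  | 0 => 0
  | 1 => 1
  | n + 2 =>
      (-(9/5) * (n + 1) * q (n + 1)
        - ∑ k ∈ (Finset.range (n + 2)).attach, q k.1 * q (n + 1 - k.1)) / (n + 2)
  decreasing_by
  · omega
  · have := Finset.mem_range.mp k.2; omega
  · omega

lemma q0 : q 0 = 0 := by simp [q]
lemma q1 : q 1 = 1 := by simp [q]

lemma q_rec (n : ℕ) (hn : 1 ≤ n) :
    ((n : ℚ) + 1) * q (n + 1) =
      -(9/5) * n * q n - ∑ k ∈ Finset.range (n + 1), q k * q (n - k) := by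
  obtain ⟨m, rfl⟩ : ∃ m, n = m + 1 := ⟨n - 1, by omega⟩
  push_cast
  show ((m : ℚ) + 1 + 1) * q (m + 2) = _
  rw [q]
  rw [Finset.sum_attach (Finset.range (m + 2)) (fun k => q k * q (m + 1 - k))]
  have h2 : ((m : ℚ) + 2) ≠ 0 := by positivity
  field_simp
  ring


lemma q2 : q 2 = -9/10 := by
  have h := q_rec 1 (by norm_num)
  simp only [Finset.sum_range_succ, Finset.sum_range_zero] at h
  norm_num [q0, q1] at h
  linarith

lemma q3 : q 3 = 56/75 := by
  have h := q_rec 2 (by norm_num)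
  simp only [Finset.sum_range_succ, Finset.sum_range_zero] at h
  norm_num [q0, q1, q2] at h
  linarith

lemma q4 : q 4 = -279/500 := by
  have h := q_rec 3 (by norm_num)
  simp only [Finset.sum_range_succ, Finset.sum_range_zero] at h
  norm_num [q0, q1, q2, q3] at h
  linarith

lemma q5 : q 5 = 12857/37500 := by
  have h := q_rec 4 (by norm_num)
  simp only [Finset.sum_range_succ, Finset.sum_range_zero] at h
  norm_num [q0, q1, q2, q3, q4] at h
  linarith

lemma q6 : q 6 = -2607/25000 := by
  have h := q_rec 5 (by norm_num)
  simp only [Finset.sum_range_succ, Finset.sum_range_zero] at h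
  norm_num [q0, q1, q2, q3, q4, q5] at h
  linarith

lemma q7 : q 7 = -22528/140625 := by
  have h := q_rec 6 (by norm_num)
  simp only [Finset.sum_range_succ, Finset.sum_range_zero] at h
  norm_num [q0, q1, q2, q3, q4, q5, q6] at h
  linarith

lemma q8 : q 8 = 574607/1250000 := by
  have h := q_rec 7 (by norm_num)
  simp only [Finset.sum_range_succ, Finset.sum_range_zero] at h
  norm_num [q0, q1, q2, q3, q4, q5, q6, q7] at h
  linarith

lemma q9 : q 9 = -411195191/506250000 := by
  have h := q_rec 8 (by norm_num)
  simp only [Finset.sum_range_succ, Finset.sum_range_zero] at h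
  norm_num [q0, q1, q2, q3, q4, q5, q6, q7, q8] at h
  linarith

lemma q10 : q 10 = 390277051/312500000 := by
  have h := q_rec 9 (by norm_num)
  simp only [Finset.sum_range_succ, Finset.sum_range_zero] at h
  norm_num [q0, q1, q2, q3, q4, q5, q6, q7, q8, q9] at h
  linarith

lemma q11 : q 11 = -287969144/158203125 := by
  have h := q_rec 10 (by norm_num)
  simp only [Finset.sum_range_succ, Finset.sum_range_zero] at h
  norm_num [q0, q1, q2, q3, q4, q5, q6, q7, q8, q9, q10] at h
  linarith

lemma q12 : q 12 = 14665967429/5625000000 := by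
  have h := q_rec 11 (by norm_num)
  simp only [Finset.sum_range_succ, Finset.sum_range_zero] at h
  norm_num [q0, q1, q2, q3, q4, q5, q6, q7, q8, q9, q10, q11] at h
  linarith

lemma q13 : q 13 = -2839121733119/759375000000 := by
  have h := q_rec 12 (by norm_num)
  simp only [Finset.sum_range_succ, Finset.sum_range_zero] at h
  norm_num [q0, q1, q2, q3, q4, q5, q6, q7, q8, q9, q10, q11, q12] at h
  linarith

lemma q14 : q 14 = 4572878734847/843750000000 := by
  have h := q_rec 13 (by norm_num)
  simp only [Finset.sum_range_succ, Finset.sum_range_zero] at h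
  norm_num [q0, q1, q2, q3, q4, q5, q6, q7, q8, q9, q10, q11, q12, q13] at h
  linarith

lemma q15 : q 15 = -35496881042272/4449462890625 := by
  have h := q_rec 14 (by norm_num)
  simp only [Finset.sum_range_succ, Finset.sum_range_zero] at h
  norm_num [q0, q1, q2, q3, q4, q5, q6, q7, q8, q9, q10, q11, q12, q13, q14] at h
  linarith


/-- `b n = (-1)^n * q n`, positive and growing for `n ≥ 7`. -/
def b (n : ℕ) : ℚ := (-1) ^ n * q n

lemma b_rec (n : ℕ) (hn : 1 ≤ n) :
    ((n : ℚ) + 1) * b (n + 1) =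
      (9/5) * n * b n + ∑ k ∈ Finset.range (n + 1), b k * b (n - k) := by
  have h := q_rec n hn
  have hsum : ∑ k ∈ Finset.range (n + 1), b k * b (n - k)
      = (-1) ^ n * ∑ k ∈ Finset.range (n + 1), q k * q (n - k) := by
    rw [Finset.mul_sum]
    refine Finset.sum_congr rfl (fun k hk => ?_)
    have hk' : k ≤ n := Nat.lt_succ_iff.mp (Finset.mem_range.mp hk)
    have : (-1 : ℚ) ^ n = (-1) ^ k * (-1) ^ (n - k) := by
      rw [← pow_add, Nat.add_sub_cancel' hk']
    rw [b, b, this]; ring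
  have hpow : ((-1 : ℚ) ^ (n+1)) * ((-1 : ℚ) ^ (n+1)) = 1 := by
    rw [← pow_add]; exact (neg_one_pow_eq_one_iff_even (by norm_num)).mpr ⟨n+1, rfl⟩
  calc ((n : ℚ) + 1) * b (n + 1) = ((-1)^(n+1) * ((n : ℚ) + 1) * q (n + 1)) := by
        rw [b]; ring
    _ = (-1)^(n+1) * (-(9/5) * n * q n - ∑ k ∈ Finset.range (n + 1), q k * q (n - k)) := by
        rw [mul_assoc, h]
    _ = (9/5) * n * ((-1)^n * q n) + (-1)^n * ∑ k ∈ Finset.range (n + 1), q k * q (n - k) := by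
        rw [pow_succ]; ring
    _ = _ := by rw [hsum, b]

-- values of b
lemma b0 : b 0 = 0 := by rw [b, q0]; norm_num
lemma b1 : b 1 = -1 := by rw [b, q1]; norm_num
lemma b2 : b 2 = -9/10 := by rw [b, q2]; norm_num
lemma b3 : b 3 = -56/75 := by rw [b, q3]; norm_num
lemma b4 : b 4 = -279/500 := by rw [b, q4]; norm_num
lemma b5 : b 5 = -12857/37500 := by rw [b, q5]; norm_num
lemma b6 : b 6 = -2607/25000 := by rw [b, q6]; norm_num
lemma b7 : b 7 = 22528/140625 := by rw [b, q7]; norm_num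
lemma b8 : b 8 = 574607/1250000 := by rw [b, q8]; norm_num
lemma b9 : b 9 = 411195191/506250000 := by rw [b, q9]; norm_num
lemma b10 : b 10 = 390277051/312500000 := by rw [b, q10]; norm_num
lemma b11 : b 11 = 287969144/158203125 := by rw [b, q11]; norm_num
lemma b12 : b 12 = 14665967429/5625000000 := by rw [b, q12]; norm_num
lemma b13 : b 13 = 2839121733119/759375000000 := by rw [b, q13]; norm_num
lemma b14 : b 14 = 4572878734847/843750000000 := by rw [b, q14]; norm_num
lemma b15 : b 15 = 35496881042272/4449462890625 := by rw [b, q15]; norm_num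

/-- edge weights `c k = |q k| * (5/7)^k` for `1 ≤ k ≤ 6`, else `0`. -/
def c (k : ℕ) : ℚ :=
  if k = 1 then 5/7 else if k = 2 then 45/98 else if k = 3 then 40/147
  else if k = 4 then 1395/9604 else if k = 5 then 12857/201684
  else if k = 6 then 13035/941192 else 0

lemma c_nonneg (k : ℕ) : 0 ≤ c k := by
  unfold c
  split_ifs <;> norm_num

lemma c_eq_zero {k : ℕ} (hk : 7 ≤ k) : c k = 0 := by
  unfold c
  split_ifs <;> first | rfl | (exfalso; omega)

lemma c_sum : ∑ k ∈ Finset.range 7, c k = 1570311/941192 := by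
  simp only [Finset.sum_range_succ, Finset.sum_range_zero]
  norm_num [c]


lemma b7nn : (0:ℚ) ≤ b 7 := by rw [b7]; norm_num
lemma b8nn : (0:ℚ) ≤ b 8 := by rw [b8]; norm_num

/-- Main induction: positivity and ratio growth of `b`. -/
lemma main_ind : ∀ m : ℕ, 9 ≤ m → 0 < b m ∧ (7/5) * b m ≤ b (m + 1) := by
  intro m
  induction m using Nat.strong_induction_on with
  | _ m IH =>
    intro hm
    by_cases hm14 : m ≤ 14
    · interval_cases m <;>
        refine ⟨by norm_num [b9, b10, b11, b12, b13, b14], by norm_num [b9, b10, b11, b12, b13, b14, b15]⟩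
    · have hm15 : 15 ≤ m := by omega
      -- positivity of b m from the induction hypothesis at m - 1
      have hprev := IH (m - 1) (by omega) (by omega)
      have hbm : 0 < b m := by
        have h2 := hprev.2
        rw [show m - 1 + 1 = m by omega] at h2
        nlinarith [hprev.1]
      -- ratio facts for the six previous steps
      have estep : ∀ j : ℕ, 1 ≤ j → j ≤ 6 → (7/5) * b (m - j) ≤ b (m - j + 1) := by
        intro j h1 h6
        exact (IH (m - j) (by omega) (by omega)).2
      have e1 : (7/5) * b (m - 1) ≤ b m := by
        have := estep 1 (by norm_num) (by norm_num); rwa [show m - 1 + 1 = m by omega] at this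
      have e2 : (7/5) * b (m - 2) ≤ b (m - 1) := by
        have := estep 2 (by norm_num) (by norm_num); rwa [show m - 2 + 1 = m - 1 by omega] at this
      have e3 : (7/5) * b (m - 3) ≤ b (m - 2) := by
        have := estep 3 (by norm_num) (by norm_num); rwa [show m - 3 + 1 = m - 2 by omega] at this
      have e4 : (7/5) * b (m - 4) ≤ b (m - 3) := by
        have := estep 4 (by norm_num) (by norm_num); rwa [show m - 4 + 1 = m - 3 by omega] at this
      have e5 : (7/5) * b (m - 5) ≤ b (m - 4) := by
        have := estep 5 (by norm_num) (by norm_num); rwa [show m - 5 + 1 = m - 4 by omega] at this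
      have e6 : (7/5) * b (m - 6) ≤ b (m - 5) := by
        have := estep 6 (by norm_num) (by norm_num); rwa [show m - 6 + 1 = m - 5 by omega] at this
      have pos6 : ∀ j : ℕ, 1 ≤ j → j ≤ 6 → 0 < b (m - j) := by
        intro j h1 h6
        exact (IH (m - j) (by omega) (by omega)).1
      -- nonnegativity in the middle range
      have hnn : ∀ j : ℕ, 7 ≤ j → j < m → 0 ≤ b j := by
        intro j h7 hj
        by_cases h8 : j ≤ 8
        · interval_cases j
          · exact b7nn
          · exact b8nn
        · exact (IH j hj (by omega)).1.le
      -- edge bound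
      have edge : ∀ j : ℕ, 1 ≤ j → j ≤ 6 → -(c j) * b m ≤ b j * b (m - j) := by
        intro j h1 h6
        have p1 := pos6 1 (by norm_num) (by norm_num)
        have p2 := pos6 2 (by norm_num) (by norm_num)
        have p3 := pos6 3 (by norm_num) (by norm_num)
        have p4 := pos6 4 (by norm_num) (by norm_num)
        have p5 := pos6 5 (by norm_num) (by norm_num)
        have p6 := pos6 6 (by norm_num) (by norm_num)
        interval_cases j
        · rw [b1]; simp only [c]; norm_num; linarith
        · rw [b2]; simp only [c]; norm_num; linarith
        · rw [b3]; simp only [c]; norm_num; linarith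
        · rw [b4]; simp only [c]; norm_num; linarith
        · rw [b5]; simp only [c]; norm_num; linarith
        · rw [b6]; simp only [c]; norm_num; linarith
      -- pointwise bound on convolution terms
      have hpt : ∀ k ∈ Finset.range (m + 1), -(c k + c (m - k)) * b m ≤ b k * b (m - k) := by
        intro k hk
        have hk' : k ≤ m := Nat.lt_succ_iff.mp (Finset.mem_range.mp hk)
        by_cases hk6 : k ≤ 6
        · by_cases hk0 : k = 0
          · subst hk0
            rw [b0, c_eq_zero (by omega : 7 ≤ m - 0)]
            simp [c]
          · have h1 : 1 ≤ k := by omega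
            rw [c_eq_zero (by omega : 7 ≤ m - k), add_zero]
            exact edge k h1 hk6
        · by_cases hk2 : 7 ≤ m - k
          · rw [c_eq_zero (by omega : 7 ≤ k), c_eq_zero hk2]
            norm_num
            exact mul_nonneg (hnn k (by omega) (by omega)) (hnn (m - k) hk2 (by omega))
          · -- m - k ≤ 6
            by_cases hkm : k = m
            · rw [hkm, Nat.sub_self, b0, c_eq_zero (by omega : 7 ≤ m)]
              simp [c]
            · have hj1 : 1 ≤ m - k := by omega
              have hj6 : m - k ≤ 6 := by omega
              have hed := edge (m - k) hj1 hj6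
              rw [show m - (m - k) = k by omega] at hed
              rw [c_eq_zero (by omega : 7 ≤ k), zero_add]
              calc -(c (m - k)) * b m ≤ b (m - k) * b k := hed
                _ = b k * b (m - k) := by ring
      -- sum bound
      have hsum : -(2 * (1570311/941192 : ℚ)) * b m ≤ ∑ k ∈ Finset.range (m + 1), b k * b (m - k) := by
        have h1 := Finset.sum_le_sum hpt
        have hr : ∑ k ∈ Finset.range (m + 1), c (m - k) = ∑ k ∈ Finset.range (m + 1), c k := by
          have := Finset.sum_range_reflect c (m + 1)
          simpa using this
        have hc7 : ∑ k ∈ Finset.range (m + 1), c k = 1570311/941192 := by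
          rw [← c_sum]
          symm
          apply Finset.sum_subset (Finset.range_subset_range.mpr (by omega))
          intro x hx hx7
          exact c_eq_zero (by simp only [Finset.mem_range] at hx7; omega)
        have h2 : ∑ k ∈ Finset.range (m + 1), (-(c k + c (m - k)) * b m)
            = -(2 * (1570311/941192 : ℚ)) * b m := by
          rw [← Finset.sum_mul]
          congr 1
          rw [Finset.sum_neg_distrib, Finset.sum_add_distrib, hr, hc7]
          ring
        linarith [h1, h2.symm.trans_le h1]
      -- conclude
      have key := b_rec m (by omega)
      have hmq : (15 : ℚ) ≤ (m : ℚ) := by exact_mod_cast hm15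
      have hm1 : (0 : ℚ) < (m : ℚ) + 1 := by positivity
      have hstep : ((m : ℚ) + 1) * ((7/5) * b m) ≤ ((m : ℚ) + 1) * b (m + 1) := by
        rw [key]
        have hq : (0:ℚ) ≤ ((2/5) * (m:ℚ) - 7/5 - 2 * (1570311/941192)) * b m :=
          mul_nonneg (by linarith) hbm.le
        nlinarith [hsum]
      exact ⟨hbm, (mul_le_mul_iff_right₀ hm1).mp hstep⟩

lemma b_ge_b10 : ∀ n : ℕ, 10 ≤ n → b 10 ≤ b n := by
  intro n hn
  induction n, hn using Nat.le_induction with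
  | base => exact le_refl _
  | succ n hn IH =>
    have h := main_ind n (by omega)
    nlinarith [h.1, h.2]

lemma one_lt_abs_q {n : ℕ} (hn : 10 ≤ n) : 1 < |q n| := by
  have h10 := b_ge_b10 n hn
  have h1 : (1:ℚ) < b n := by
    have : (1:ℚ) < b 10 := by rw [b10]; norm_num
    linarith
  have h2 : b n ≤ |q n| := by
    have habs : |b n| = |q n| := by
      rw [b, abs_mul]
      have hp : |(-1 : ℚ) ^ n| = 1 := by
        rw [_root_.abs_pow, abs_neg, abs_one, one_pow]
      rw [hp, one_mul]
    rw [← habs]; exact le_abs_self _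
  linarith





lemma analyticAt_deriv' {u : ℂ → ℂ} {x : ℂ} (hu : AnalyticAt ℂ u x) :
    AnalyticAt ℂ (deriv u) x := by
  have h : AnalyticOnNhd ℂ u {y | AnalyticAt ℂ u y} := fun y hy => hy
  exact h.deriv x hu

lemma itd_add {u v : ℂ → ℂ} {x : ℂ} (hu : AnalyticAt ℂ u x) (hv : AnalyticAt ℂ v x) (n : ℕ) :
    iteratedDeriv n (fun w => u w + v w) x = iteratedDeriv n u x + iteratedDeriv n v x := by
  induction n generalizing u v x with
  | zero => simp
  | succ n IH =>
    rw [iteratedDeriv_succ', iteratedDeriv_succ', iteratedDeriv_succ']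
    have hev : (deriv fun w => u w + v w) =ᶠ[𝓝 x] fun w => deriv u w + deriv v w := by
      filter_upwards [hu.eventually_analyticAt, hv.eventually_analyticAt] with y hy1 hy2
      exact deriv_add hy1.differentiableAt hy2.differentiableAt
    rw [hev.iteratedDeriv_eq n]
    exact IH (analyticAt_deriv' hu) (analyticAt_deriv' hv)

lemma itd_cmul (a : ℂ) {u : ℂ → ℂ} {x : ℂ} (hu : AnalyticAt ℂ u x) (n : ℕ) :
    iteratedDeriv n (fun w => a * u w) x = a * iteratedDeriv n u x := by
  induction n generalizing u x with
  | zero => simp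
  | succ n IH =>
    rw [iteratedDeriv_succ', iteratedDeriv_succ']
    have hev : (deriv fun w => a * u w) =ᶠ[𝓝 x] fun w => a * deriv u w := by
      filter_upwards [hu.eventually_analyticAt] with y hy
      exact deriv_const_mul a hy.differentiableAt
    rw [hev.iteratedDeriv_eq n]
    exact IH (analyticAt_deriv' hu)

lemma itd_const_aux : ∀ (m : ℕ) (a x : ℂ), iteratedDeriv (m + 1) (fun _ : ℂ => a) x = 0 := by
  intro m
  induction m with
  | zero => intro a x; rw [iteratedDeriv_one, deriv_const']
  | succ m IH =>
    intro a x
    rw [iteratedDeriv_succ', deriv_const']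
    exact IH 0 x

lemma itd_const {n : ℕ} (hn : n ≠ 0) (a x : ℂ) : iteratedDeriv n (fun _ : ℂ => a) x = 0 := by
  obtain ⟨m, rfl⟩ : ∃ m, n = m + 1 := ⟨n - 1, by omega⟩
  exact itd_const_aux m a x

/-- Leibniz rule for iterated derivatives of analytic functions. -/
lemma itd_mul {u v : ℂ → ℂ} {x : ℂ} (hu : AnalyticAt ℂ u x) (hv : AnalyticAt ℂ v x) (n : ℕ) :
    iteratedDeriv n (fun w => u w * v w) x =
      ∑ k ∈ Finset.range (n + 1), (n.choose k : ℂ) *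
        iteratedDeriv k u x * iteratedDeriv (n - k) v x := by
  induction n generalizing u v with
  | zero => simp
  | succ n IH =>
    have hu' := analyticAt_deriv' hu
    have hv' := analyticAt_deriv' hv
    rw [iteratedDeriv_succ']
    have hev : (deriv fun w => u w * v w) =ᶠ[𝓝 x]
        fun w => deriv u w * v w + u w * deriv v w := by
      filter_upwards [hu.eventually_analyticAt, hv.eventually_analyticAt] with y hy1 hy2
      exact deriv_fun_mul hy1.differentiableAt hy2.differentiableAt
    rw [hev.iteratedDeriv_eq n, itd_add (hu'.fun_mul hv) (hu.fun_mul hv') n]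
    have hS1 : iteratedDeriv n (fun w => deriv u w * v w) x
        = ∑ k ∈ Finset.range (n + 1),
            (n.choose k : ℂ) * iteratedDeriv (k + 1) u x * iteratedDeriv (n - k) v x := by
      rw [IH hu' hv]
      exact Finset.sum_congr rfl fun k _ => by rw [← iteratedDeriv_succ']
    have hS2 : iteratedDeriv n (fun w => u w * deriv v w) x
        = ∑ k ∈ Finset.range (n + 1),
            (n.choose k : ℂ) * iteratedDeriv k u x * iteratedDeriv (n + 1 - k) v x := by
      rw [IH hu hv']
      refine Finset.sum_congr rfl fun k hk => ?_
      have hk' : k ≤ n := Nat.lt_succ_iff.mp (Finset.mem_range.mp hk)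
      rw [← iteratedDeriv_succ', show n - k + 1 = n + 1 - k by omega]
    rw [hS1, hS2]
    rw [Finset.sum_range_succ'
      (fun k => ((n+1).choose k : ℂ) * iteratedDeriv k u x * iteratedDeriv (n + 1 - k) v x)
      (n + 1)]
    simp only [Nat.succ_sub_succ, Nat.choose_zero_right, Nat.cast_one, Nat.sub_zero]
    have hsplit : ∑ i ∈ Finset.range (n + 1),
        (((n+1).choose (i+1) : ℕ) : ℂ) * iteratedDeriv (i+1) u x * iteratedDeriv (n - i) v x
        = (∑ i ∈ Finset.range (n + 1),
            (n.choose i : ℂ) * iteratedDeriv (i+1) u x * iteratedDeriv (n - i) v x)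
          + ∑ i ∈ Finset.range (n + 1),
            (n.choose (i+1) : ℂ) * iteratedDeriv (i+1) u x * iteratedDeriv (n - i) v x := by
      rw [← Finset.sum_add_distrib]
      refine Finset.sum_congr rfl fun i _ => ?_
      have hch : (((n+1).choose (i+1) : ℕ) : ℂ) = (n.choose i : ℂ) + (n.choose (i+1) : ℂ) := by
        rw [Nat.choose_succ_succ]; push_cast; ring
      rw [hch]; ring
    rw [hsplit]
    have hS2' : ∑ k ∈ Finset.range (n + 1),
        (n.choose k : ℂ) * iteratedDeriv k u x * iteratedDeriv (n + 1 - k) v x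
        = (∑ i ∈ Finset.range n,
            (n.choose (i+1) : ℂ) * iteratedDeriv (i+1) u x * iteratedDeriv (n - i) v x)
          + iteratedDeriv 0 u x * iteratedDeriv (n + 1) v x := by
      rw [Finset.sum_range_succ'
        (fun k => (n.choose k : ℂ) * iteratedDeriv k u x * iteratedDeriv (n + 1 - k) v x) n]
      simp only [Nat.succ_sub_succ, Nat.choose_zero_right, Nat.cast_one, Nat.sub_zero, one_mul]
    have hlast : ∑ i ∈ Finset.range (n + 1),
        (n.choose (i+1) : ℂ) * iteratedDeriv (i+1) u x * iteratedDeriv (n - i) v x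
        = ∑ i ∈ Finset.range n,
            (n.choose (i+1) : ℂ) * iteratedDeriv (i+1) u x * iteratedDeriv (n - i) v x := by
      rw [Finset.sum_range_succ, Nat.choose_succ_self]
      simp
    rw [hlast, hS2']
    ring






/-! ### The sector map and its inverse -/

noncomputable def EKS (z : ℂ) : ℂ := Complex.exp ((9/10) * Complex.log ((1 + z) / (1 - z)))

noncomputable def fKS (z : ℂ) : ℂ := (EKS z - 1) / (9/5)

noncomputable def VKS (w : ℂ) : ℂ := Complex.exp ((10/9) * Complex.log (1 + (9/5) * w))

noncomputable def gKS (w : ℂ) : ℂ := (VKS w - 1) / (VKS w + 1)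

noncomputable def F1 (z : ℂ) : ℂ := EKS z / (1 - z^2)

/-! ### basic nonvanishing facts -/

lemma one_sub_ne {z : ℂ} (hz : ‖z‖ < 1) : (1:ℂ) - z ≠ 0 := by
  intro h
  have : z = 1 := by linear_combination -h
  rw [this] at hz; simp at hz

lemma one_add_ne {z : ℂ} (hz : ‖z‖ < 1) : (1:ℂ) + z ≠ 0 := by
  intro h
  have : z = -1 := by linear_combination h
  rw [this] at hz; simp at hz

lemma one_sub_sq_ne {z : ℂ} (hz : ‖z‖ < 1) : (1:ℂ) - z^2 ≠ 0 := by
  have : (1:ℂ) - z^2 = (1 - z) * (1 + z) := by ring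
  rw [this]
  exact mul_ne_zero (one_sub_ne hz) (one_add_ne hz)

lemma re_div_pos₁ {z : ℂ} (hz : ‖z‖ < 1) : 0 < ((1 + z) / (1 - z)).re := by
  have h1 : Complex.normSq z < 1 := by
    rw [Complex.normSq_eq_norm_sq]; nlinarith [norm_nonneg z]
  have h2 : 0 < Complex.normSq (1 - z) := Complex.normSq_pos.mpr (one_sub_ne hz)
  rw [Complex.div_re, ← add_div]
  apply div_pos ?_ h2
  rw [Complex.normSq_apply] at h1
  simp only [Complex.add_re, Complex.add_im, Complex.sub_re, Complex.sub_im,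
    Complex.one_re, Complex.one_im]
  nlinarith

lemma re_div_pos₂ {z : ℂ} (hz : ‖z‖ < 1) : 0 < ((1 - z) / (1 + z)).re := by
  have h1 : Complex.normSq z < 1 := by
    rw [Complex.normSq_eq_norm_sq]; nlinarith [norm_nonneg z]
  have h2 : 0 < Complex.normSq (1 + z) := Complex.normSq_pos.mpr (one_add_ne hz)
  rw [Complex.div_re, ← add_div]
  apply div_pos ?_ h2
  rw [Complex.normSq_apply] at h1
  simp only [Complex.add_re, Complex.add_im, Complex.sub_re, Complex.sub_im,
    Complex.one_re, Complex.one_im]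
  nlinarith

lemma slit₁ {z : ℂ} (hz : ‖z‖ < 1) : (1 + z) / (1 - z) ∈ Complex.slitPlane :=
  Complex.mem_slitPlane_iff.mpr (Or.inl (re_div_pos₁ hz))

/-! ### derivatives of `fKS` -/

lemma hasDeriv_E {z : ℂ} (hz : ‖z‖ < 1) :
    HasDerivAt EKS (EKS z * ((9/10) * (2 / (1 - z^2)))) z := by
  have h1 := one_sub_ne hz
  have h2 := one_add_ne hz
  have hsq := one_sub_sq_ne hz
  have hM : HasDerivAt (fun z : ℂ => (1 + z) / (1 - z)) (2 / (1 - z)^2) z := by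
    have hu : HasDerivAt (fun z : ℂ => 1 + z) 1 z := (hasDerivAt_id z).const_add 1
    have hv : HasDerivAt (fun z : ℂ => 1 - z) (-1) z := (hasDerivAt_id z).const_sub 1
    have := hu.div hv h1
    refine this.congr_deriv ?_
    field_simp
    ring
  have hL : HasDerivAt (fun z : ℂ => Complex.log ((1 + z) / (1 - z)))
      (((1 + z) / (1 - z))⁻¹ * (2 / (1 - z)^2)) z :=
    (Complex.hasDerivAt_log (slit₁ hz)).comp (h₂ := Complex.log) z hM
  have hL2 : HasDerivAt (fun z : ℂ => Complex.log ((1 + z) / (1 - z))) (2 / (1 - z^2)) z := by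
    convert hL using 1
    field_simp
    ring
  exact (hL2.const_mul (9/10 : ℂ)).cexp

lemma hasDeriv_f {z : ℂ} (hz : ‖z‖ < 1) : HasDerivAt fKS (F1 z) z := by
  have hsq := one_sub_sq_ne hz
  have h := ((hasDeriv_E hz).sub_const 1).div_const (9/5 : ℂ)
  have : EKS z * (9/10 * (2 / (1 - z^2))) / (9/5) = F1 z := by
    rw [F1]
    field_simp
    ring
  rw [this] at h
  exact h

lemma deriv_f_eq {z : ℂ} (hz : ‖z‖ < 1) : deriv fKS z = F1 z :=
  (hasDeriv_f hz).deriv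

lemma hasDeriv_F1 {z : ℂ} (hz : ‖z‖ < 1) :
    HasDerivAt F1 (EKS z * ((9/5) + 2*z) / (1 - z^2)^2) z := by
  have hsq := one_sub_sq_ne hz
  have hden : HasDerivAt (fun z : ℂ => 1 - z^2) (-(2*z)) z := by
    have : HasDerivAt (fun z : ℂ => z^2) (2*z) z := by
      simpa using (hasDerivAt_pow 2 z)
    simpa using this.const_sub 1
  have h := (hasDeriv_E hz).div hden hsq
  refine h.congr_deriv ?_
  field_simp
  ring

lemma deriv2_f_eq {z : ℂ} (hz : ‖z‖ < 1) :
    deriv (deriv fKS) z = EKS z * ((9/5) + 2*z) / (1 - z^2)^2 := by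
  have hball : z ∈ Metric.ball (0:ℂ) 1 := by rwa [mem_ball_zero_iff]
  have hev : deriv fKS =ᶠ[𝓝 z] F1 := by
    filter_upwards [isOpen_ball.eventually_mem hball] with y hy
    exact deriv_f_eq (mem_ball_zero_iff.mp hy)
  rw [hev.deriv_eq]
  exact (hasDeriv_F1 hz).deriv

lemma EKS_ne {z : ℂ} : EKS z ≠ 0 := Complex.exp_ne_zero _

lemma convexQuot_f {z : ℂ} (hz : ‖z‖ < 1) :
    convexQuot fKS z = (19/20 : ℂ) * ((1 + z)/(1 - z)) + (1/20 : ℂ) * ((1 - z)/(1 + z)) := by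
  have h1 := one_sub_ne hz
  have h2 := one_add_ne hz
  have hsq := one_sub_sq_ne hz
  have hE : EKS z ≠ 0 := EKS_ne
  rw [convexQuot, deriv2_f_eq hz, deriv_f_eq hz, F1]
  field_simp
  ring


/-! ### the inverse function `gKS` -/

lemma zeta_re_pos {w : ℂ} (hw : ‖w‖ < 1/2) : 0 < (1 + (9/5) * w).re := by
  have h9 : ((9/5 : ℂ) * w).re = (9/5) * w.re := by
    rw [show (9/5 : ℂ) = ((9/5 : ℝ) : ℂ) by norm_num, Complex.re_ofReal_mul]
  have habs := Complex.abs_re_le_norm w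
  simp only [Complex.add_re, Complex.one_re, h9]
  cases' abs_le.mp habs with hl hr
  nlinarith

lemma zeta_ne {w : ℂ} (hw : ‖w‖ < 1/2) : (1 : ℂ) + (9/5) * w ≠ 0 := by
  intro h
  have := zeta_re_pos hw
  rw [h] at this
  simp at this

lemma zeta_slit {w : ℂ} (hw : ‖w‖ < 1/2) : (1 : ℂ) + (9/5) * w ∈ Complex.slitPlane :=
  Complex.mem_slitPlane_iff.mpr (Or.inl (zeta_re_pos hw))

lemma VKS_ne {w : ℂ} : VKS w ≠ 0 := Complex.exp_ne_zero _

lemma im_arg_bound {w : ℂ} (hw : ‖w‖ < 1/2) :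
    |((10/9 : ℂ) * Complex.log (1 + (9/5) * w)).im| < Real.pi := by
  have h10 : ((10/9 : ℂ) * Complex.log (1 + (9/5) * w)).im
      = (10/9) * (Complex.log (1 + (9/5) * w)).im := by
    rw [show (10/9 : ℂ) = ((10/9 : ℝ) : ℂ) by norm_num, Complex.im_ofReal_mul]
  have harg : |Complex.arg (1 + (9/5) * w)| < Real.pi / 2 :=
    Complex.abs_arg_lt_pi_div_two_iff.mpr (Or.inl (zeta_re_pos hw))
  rw [h10, Complex.log_im, abs_mul]
  have hpi := Real.pi_pos
  rw [abs_of_pos (show (0:ℝ) < 10/9 by norm_num)]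
  nlinarith [abs_nonneg (Complex.arg (1 + (9/5) * w))]

lemma V_add_one_ne {w : ℂ} (hw : ‖w‖ < 1/2) : VKS w + 1 ≠ 0 := by
  intro h
  have hV : VKS w = -1 := by linear_combination h
  set u := (10/9 : ℂ) * Complex.log (1 + (9/5) * w) with hu
  have hexp : Complex.exp (u - Real.pi * Complex.I) = 1 := by
    rw [Complex.exp_sub, Complex.exp_pi_mul_I]
    rw [show Complex.exp u = VKS w from rfl, hV]
    norm_num
  obtain ⟨n, hn⟩ := Complex.exp_eq_one_iff.mp hexp
  have hb := im_arg_bound hw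
  rw [← hu] at hb
  have hpi := Real.pi_pos
  have hu_eq : u = ((Real.pi + (n:ℝ) * (2 * Real.pi) : ℝ) : ℂ) * Complex.I := by
    push_cast
    linear_combination hn
  have him : u.im = Real.pi + (n:ℝ) * (2 * Real.pi) := by
    rw [hu_eq]
    simp [Complex.mul_im, Complex.I_re, Complex.I_im, Complex.ofReal_re, Complex.ofReal_im]
  have habs := abs_lt.mp hb
  rcases le_or_gt 0 n with h' | h'
  · have h'' : (0:ℝ) ≤ (n:ℝ) := by exact_mod_cast h'
    nlinarith [habs.2]
  · have h'' : n ≤ -1 := by omega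
    have h3 : (n:ℝ) ≤ -1 := by exact_mod_cast h''
    nlinarith [habs.1]

lemma hasDeriv_V {w : ℂ} (hw : ‖w‖ < 1/2) :
    HasDerivAt VKS (2 * VKS w / (1 + (9/5) * w)) w := by
  have hζ : HasDerivAt (fun w : ℂ => 1 + (9/5) * w) (9/5) w := by
    simpa using ((hasDerivAt_id w).const_mul (9/5 : ℂ)).const_add 1
  have hlog : HasDerivAt (fun w : ℂ => Complex.log (1 + (9/5) * w))
      ((1 + (9/5) * w)⁻¹ * (9/5)) w :=
    (Complex.hasDerivAt_log (zeta_slit hw)).comp (h₂ := Complex.log) w hζ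
  have h := (hlog.const_mul (10/9 : ℂ)).cexp
  refine h.congr_deriv ?_
  rw [show Complex.exp ((10/9 : ℂ) * Complex.log (1 + (9/5) * w)) = VKS w from rfl,
    div_eq_mul_inv]
  ring

lemma sq_identity {w : ℂ} (hw : ‖w‖ < 1/2) :
    1 - gKS w * gKS w = 4 * VKS w / (VKS w + 1)^2 := by
  have hne := V_add_one_ne hw
  rw [gKS, div_mul_div_comm, eq_div_iff (pow_ne_zero 2 hne)]
  field_simp
  ring

lemma hasDeriv_g {w : ℂ} (hw : ‖w‖ < 1/2) :
    HasDerivAt gKS ((1 - gKS w * gKS w) / (1 + (9/5) * w)) w := by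
  have hV := hasDeriv_V hw
  have hne := V_add_one_ne hw
  have hz := zeta_ne hw
  have h := (hV.sub_const 1).div (hV.add_const 1) hne
  refine h.congr_deriv ?_
  have hnum : 2 * VKS w / (1 + (9/5) * w) * (VKS w + 1)
      - (VKS w - 1) * (2 * VKS w / (1 + (9/5) * w)) = 4 * VKS w / (1 + (9/5) * w) := by
    ring
  rw [hnum, div_div, sq_identity hw, div_div, mul_comm ((VKS w + 1)^2)]

lemma g_diff : DifferentiableOn ℂ gKS (Metric.ball (0:ℂ) (1/2)) := by
  intro w hw
  exact (hasDeriv_g (mem_ball_zero_iff.mp hw)).differentiableAt.differentiableWithinAt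

lemma gODE {w : ℂ} (hw : ‖w‖ < 1/2) :
    (1 + (9/5) * w) * deriv gKS w = 1 - gKS w * gKS w := by
  rw [(hasDeriv_g hw).deriv, mul_div_cancel₀ _ (zeta_ne hw)]

lemma g_zero : gKS 0 = 0 := by
  rw [gKS, VKS]
  simp



/-! ### from the ODE to the coefficient recurrence -/

lemma g_analyticAt : AnalyticAt ℂ gKS 0 := by
  have h := g_diff.analyticOnNhd Metric.isOpen_ball
  exact h 0 (by rw [mem_ball_zero_iff]; norm_num)

lemma g'_analyticAt : AnalyticAt ℂ (deriv gKS) 0 := analyticAt_deriv' g_analyticAt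

lemma aff_analyticAt : AnalyticAt ℂ (fun w : ℂ => 1 + (9/5) * w) 0 := by
  apply AnalyticAt.add analyticAt_const
  exact AnalyticAt.mul analyticAt_const (analyticAt_id)

lemma deriv_aff : deriv (fun w : ℂ => 1 + (9/5) * w) = fun _ => (9/5 : ℂ) := by
  funext y
  have : HasDerivAt (fun w : ℂ => 1 + (9/5) * w) (9/5) y := by
    simpa using ((hasDerivAt_id y).const_mul (9/5 : ℂ)).const_add 1
  exact this.deriv

lemma itd_aff0 : iteratedDeriv 0 (fun w : ℂ => 1 + (9/5) * w) 0 = 1 := by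
  rw [iteratedDeriv_zero]; simp

lemma itd_aff1 : iteratedDeriv 1 (fun w : ℂ => 1 + (9/5) * w) 0 = 9/5 := by
  rw [iteratedDeriv_one, deriv_aff]

lemma itd_aff {k : ℕ} (hk : 2 ≤ k) :
    iteratedDeriv k (fun w : ℂ => 1 + (9/5) * w) 0 = 0 := by
  obtain ⟨m, rfl⟩ : ∃ m, k = m + 2 := ⟨k - 2, by omega⟩
  rw [show m + 2 = (m + 1) + 1 by omega, iteratedDeriv_succ', deriv_aff]
  exact itd_const_aux m (9/5) 0

lemma P_rec (n : ℕ) (hn : 1 ≤ n) :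
    iteratedDeriv (n+1) gKS 0 = -(9/5) * n * iteratedDeriv n gKS 0
      - ∑ k ∈ Finset.range (n+1), (n.choose k : ℂ)
          * iteratedDeriv k gKS 0 * iteratedDeriv (n-k) gKS 0 := by
  have h0 : (0:ℂ) ∈ Metric.ball (0:ℂ) (1/2) := by rw [mem_ball_zero_iff]; norm_num
  have hφψ : (fun w => (1 + (9/5)*w) * deriv gKS w) =ᶠ[𝓝 (0:ℂ)]
      (fun w => 1 - gKS w * gKS w) := by
    filter_upwards [Metric.isOpen_ball.eventually_mem h0] with y hy
    exact gODE (mem_ball_zero_iff.mp hy)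
  have hmain := hφψ.iteratedDeriv_eq n
  rw [itd_mul aff_analyticAt g'_analyticAt n] at hmain
  have hLcollapse : ∑ k ∈ Finset.range (n+1), (n.choose k : ℂ)
      * iteratedDeriv k (fun w : ℂ => 1 + (9/5)*w) 0 * iteratedDeriv (n-k) (deriv gKS) 0
      = iteratedDeriv (n+1) gKS 0 + (9/5) * n * iteratedDeriv n gKS 0 := by
    rw [← Finset.sum_subset (Finset.range_subset_range.mpr (show 2 ≤ n+1 by omega))
      (fun x _ hx2 => by
        rw [itd_aff (show 2 ≤ x by simp [Finset.mem_range, not_lt] at hx2; omega)]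
        ring)]
    rw [Finset.sum_range_succ, Finset.sum_range_one, itd_aff0, itd_aff1]
    rw [Nat.choose_zero_right, Nat.choose_one_right]
    rw [Nat.sub_zero, show iteratedDeriv n (deriv gKS) 0 = iteratedDeriv (n+1) gKS 0 by
      rw [← iteratedDeriv_succ']]
    rw [show iteratedDeriv (n-1) (deriv gKS) 0 = iteratedDeriv n gKS 0 by
      rw [← iteratedDeriv_succ', show n - 1 + 1 = n by omega]]
    push_cast
    ring
  rw [hLcollapse] at hmain
  -- right-hand side
  have hgg : AnalyticAt ℂ (fun w => gKS w * gKS w) 0 := g_analyticAt.mul g_analyticAt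
  have hRHS : iteratedDeriv n (fun w => 1 - gKS w * gKS w) 0
      = - iteratedDeriv n (fun w => gKS w * gKS w) 0 := by
    have hfe : (fun w => 1 - gKS w * gKS w)
        = (fun w => (fun _ : ℂ => (1:ℂ)) w + (fun w => (-1) * (gKS w * gKS w)) w) := by
      funext y; ring
    rw [hfe, itd_add analyticAt_const (analyticAt_const.fun_mul hgg) n,
      itd_const (by omega : n ≠ 0) 1 0, itd_cmul (-1) hgg n]
    ring
  rw [hRHS, itd_mul g_analyticAt g_analyticAt n] at hmain
  linear_combination hmain

/-! ### matching with the rational coefficients -/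

noncomputable def Ac : ℕ → ℂ := fun n => ((q n : ℚ) : ℂ)

lemma deriv_g_zero : deriv gKS 0 = 1 := by
  have h := gODE (show ‖0‖ < 1/2 by norm_num)
  rw [g_zero] at h
  simpa using h

lemma P_eq : ∀ n : ℕ, iteratedDeriv n gKS 0 = (Nat.factorial n : ℂ) * ((q n : ℚ) : ℂ) := by
  intro n
  induction n using Nat.strong_induction_on with
  | _ n IH =>
    match n with
    | 0 => simp [iteratedDeriv_zero, g_zero, q0]
    | 1 => simp [iteratedDeriv_one, deriv_g_zero, q1]
    | (m+2) =>
      have hrec := P_rec (m+1) (by omega)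
      rw [IH (m+1) (by omega)] at hrec
      have hsum : ∑ k ∈ Finset.range (m+2), ((m+1).choose k : ℂ)
          * iteratedDeriv k gKS 0 * iteratedDeriv (m+1-k) gKS 0
          = (Nat.factorial (m+1) : ℂ)
            * ∑ k ∈ Finset.range (m+2), ((q k : ℚ) : ℂ) * ((q (m+1-k) : ℚ) : ℂ) := by
        rw [Finset.mul_sum]
        refine Finset.sum_congr rfl fun k hk => ?_
        have hk' : k ≤ m + 1 := Nat.lt_succ_iff.mp (Finset.mem_range.mp hk)
        rw [IH k (by omega), IH (m+1-k) (by omega)]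
        have hfact : ((m+1).choose k : ℂ) * (Nat.factorial k : ℂ)
            * (Nat.factorial (m+1-k) : ℂ) = (Nat.factorial (m+1) : ℂ) := by
          exact_mod_cast Nat.choose_mul_factorial_mul_factorial hk'
        calc ((m+1).choose k : ℂ) * ((Nat.factorial k : ℂ) * ((q k : ℚ) : ℂ))
              * ((Nat.factorial (m+1-k) : ℂ) * ((q (m+1-k) : ℚ) : ℂ))
            = (((m+1).choose k : ℂ) * (Nat.factorial k : ℂ) * (Nat.factorial (m+1-k) : ℂ))
              * (((q k : ℚ) : ℂ) * ((q (m+1-k) : ℚ) : ℂ)) := by ring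
          _ = (Nat.factorial (m+1) : ℂ) * (((q k : ℚ) : ℂ) * ((q (m+1-k) : ℚ) : ℂ)) := by
              rw [hfact]
      rw [show m + 1 + 1 = m + 2 from rfl] at hrec
      rw [hsum] at hrec
      have hq := q_rec (m+1) (by omega)
      have hqc : ((m:ℂ) + 1 + 1) * ((q (m+2) : ℚ) : ℂ)
          = -(9/5) * ((m:ℂ) + 1) * ((q (m+1) : ℚ) : ℂ)
            - ∑ k ∈ Finset.range (m+2), ((q k : ℚ) : ℂ) * ((q (m+1-k) : ℚ) : ℂ) := by
        have hc := congrArg (fun x : ℚ => (x : ℂ)) hq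
        push_cast at hc ⊢
        convert hc using 2
      have hfs : (Nat.factorial (m+2) : ℂ) = ((m:ℂ) + 2) * (Nat.factorial (m+1) : ℂ) := by
        rw [show Nat.factorial (m+2) = (m+2) * Nat.factorial (m+1) from Nat.factorial_succ (m+1)]
        push_cast
        ring
      rw [hrec, hfs]
      push_cast at hqc ⊢
      linear_combination (-(Nat.factorial (m+1) : ℂ)) * hqc

/-! ### Taylor expansion and inverse identities -/

lemma hasSum_g {w : ℂ} (hw : ‖w‖ < 1/10) :
    HasSum (fun n : ℕ => Ac n * w ^ n) (gKS w) := by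
  have hball : w ∈ Metric.ball (0:ℂ) (1/2) := by
    rw [mem_ball_zero_iff]
    calc ‖w‖ = ‖w‖ := rfl
      _ < 1/10 := hw
      _ < 1/2 := by norm_num
  have h := Complex.hasSum_taylorSeries_on_ball g_diff hball
  have hfun : (fun n : ℕ => Ac n * w ^ n)
      = fun n : ℕ => (Nat.factorial n : ℂ)⁻¹ • (w - 0) ^ n • iteratedDeriv n gKS 0 := by
    funext n
    rw [P_eq n, smul_eq_mul, smul_eq_mul, sub_zero]
    have hne : (Nat.factorial n : ℂ) ≠ 0 := Nat.cast_ne_zero.mpr (Nat.factorial_ne_zero n)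
    simp only [Ac]
    field_simp
  rw [hfun]
  exact h

lemma g_small {w : ℂ} (hw : ‖w‖ < 1/10) :
    ‖VKS w - 1‖ ≤ 3/5 ∧ 7/5 ≤ ‖VKS w + 1‖ ∧
      ‖(10/9 : ℂ) * Complex.log (1 + (9/5)*w)‖ ≤ 3/10 := by
  have hz : ‖(9/5 : ℂ) * w‖ ≤ 9/50 := by
    rw [norm_mul]
    have : ‖(9/5 : ℂ)‖ = 9/5 := by
      rw [show (9/5 : ℂ) = ((9/5 : ℝ) : ℂ) by norm_num, Complex.norm_real]
      norm_num
    rw [this]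
    nlinarith [norm_nonneg w]
  have hlog : ‖Complex.log (1 + (9/5) * w)‖ ≤ 27/100 := by
    have h := Complex.norm_log_one_add_half_le_self (z := (9/5) * w)
      (by linarith)
    calc ‖Complex.log (1 + (9/5) * w)‖ ≤ 3/2 * ‖(9/5) * w‖ := h
      _ ≤ 3/2 * (9/50) := by nlinarith [norm_nonneg ((9/5 : ℂ) * w)]
      _ = 27/100 := by norm_num
  have hu : ‖(10/9 : ℂ) * Complex.log (1 + (9/5)*w)‖ ≤ 3/10 := by
    rw [norm_mul]
    have h109 : ‖(10/9 : ℂ)‖ = 10/9 := by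
      rw [show (10/9 : ℂ) = ((10/9 : ℝ) : ℂ) by norm_num, Complex.norm_real]
      norm_num
    rw [h109]
    nlinarith [norm_nonneg (Complex.log (1 + (9/5)*w))]
  have hVm1 : ‖VKS w - 1‖ ≤ 3/5 := by
    have := Complex.norm_exp_sub_one_le (x := (10/9 : ℂ) * Complex.log (1 + (9/5)*w))
      (by linarith)
    calc ‖VKS w - 1‖ ≤ 2 * ‖(10/9 : ℂ) * Complex.log (1 + (9/5)*w)‖ :=
        this
      _ ≤ 3/5 := by linarith
  refine ⟨hVm1, ?_, hu⟩
  have htri := norm_sub_le (VKS w + 1) (VKS w - 1)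
  have h2 : ‖(VKS w + 1) - (VKS w - 1)‖ = 2 := by
    rw [show (VKS w + 1) - (VKS w - 1) = ((2:ℝ):ℂ) by push_cast; ring, Complex.norm_real]
    norm_num
  rw [h2] at htri
  linarith

lemma g_in_ball {w : ℂ} (hw : ‖w‖ < 1/10) : ‖gKS w‖ < 1 := by
  obtain ⟨h1, h2, _⟩ := g_small hw
  rw [gKS, norm_div]
  rw [div_lt_one (by linarith)]
  linarith

lemma f_inverts_g {w : ℂ} (hw : ‖w‖ < 1/10) : fKS (gKS w) = w := by
  have hw2 : ‖w‖ < 1/2 := by linarith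
  have hne := V_add_one_ne hw2
  have hzne := zeta_ne hw2
  obtain ⟨h1, h2, hu⟩ := g_small hw
  -- Möbius identity
  have h1mg : (1:ℂ) - gKS w ≠ 0 := by
    intro h
    have hgb := g_in_ball hw
    have hg1 : gKS w = 1 := by linear_combination -h
    rw [hg1] at hgb
    simp at hgb
  have hratio : (1 + gKS w) / (1 - gKS w) = VKS w := by
    rw [div_eq_iff h1mg, gKS]
    field_simp
    ring
  -- log of V
  have hlogV : Complex.log (VKS w) = (10/9 : ℂ) * Complex.log (1 + (9/5)*w) := by
    rw [VKS]
    apply Complex.log_exp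
    · have := Complex.abs_im_le_norm ((10/9 : ℂ) * Complex.log (1 + (9/5)*w))
      have hpi := Real.pi_gt_three
      have := abs_le.mp (le_trans this hu)
      linarith [this.1]
    · have := Complex.abs_im_le_norm ((10/9 : ℂ) * Complex.log (1 + (9/5)*w))
      have hpi := Real.pi_gt_three
      have := abs_le.mp (le_trans this hu)
      linarith [this.2]
  have hE : EKS (gKS w) = 1 + (9/5) * w := by
    rw [EKS, hratio, hlogV]
    rw [show (9/10 : ℂ) * ((10/9 : ℂ) * Complex.log (1 + (9/5)*w))
      = Complex.log (1 + (9/5)*w) by ring]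
    exact Complex.exp_log hzne
  rw [fKS, hE]
  have : (1 : ℂ) + (9/5) * w - 1 = (9/5) * w := by ring
  rw [this]
  field_simp


/-! ### final packaging -/

lemma f_diffOn : DifferentiableOn ℂ fKS (Metric.ball 0 1) := fun z hz =>
  (hasDeriv_f (mem_ball_zero_iff.mp hz)).differentiableAt.differentiableWithinAt

lemma f_zero : fKS 0 = 0 := by
  rw [fKS, EKS]
  norm_num

lemma deriv_f_zero : deriv fKS 0 = 1 := by
  rw [deriv_f_eq (by norm_num), F1, EKS]
  norm_num

lemma re_convexQuot_pos {z : ℂ} (hz : ‖z‖ < 1) : 0 < (convexQuot fKS z).re := by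
  rw [convexQuot_f hz]
  have h1 := re_div_pos₁ hz
  have h2 := re_div_pos₂ hz
  rw [Complex.add_re]
  have e1 : ((19/20 : ℂ) * ((1+z)/(1-z))).re = (19/20) * ((1+z)/(1-z)).re := by
    rw [show (19/20 : ℂ) = ((19/20:ℝ):ℂ) by norm_num, Complex.re_ofReal_mul]
  have e2 : ((1/20 : ℂ) * ((1-z)/(1+z))).re = (1/20) * ((1-z)/(1+z)).re := by
    rw [show (1/20 : ℂ) = ((1/20:ℝ):ℂ) by norm_num, Complex.re_ofReal_mul]
  rw [e1, e2]
  nlinarith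

lemma abs_Ac {n : ℕ} (hn : 10 ≤ n) : 1 < ‖Ac n‖ := by
  have h := one_lt_abs_q hn
  have habs : ‖Ac n‖ = |((q n : ℚ) : ℝ)| := by
    rw [Ac, show ((q n : ℚ) : ℂ) = (((q n : ℚ) : ℝ) : ℂ) by push_cast; ring,
      Complex.norm_real, Real.norm_eq_abs]
  rw [habs]
  exact_mod_cast h

end KSconv

theorem convex_inverse_coeff_large (n : ℕ) (hn : 10 ≤ n) :
    ∃ f g : ℂ → ℂ, ∃ A : ℕ → ℂ, ∃ r : ℝ, IsConvex f ∧
      IsInverseWithCoeffs f g A r ∧ 1 < ‖A n‖ := by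
  refine ⟨KSconv.fKS, KSconv.gKS, KSconv.Ac, 1/10,
    ⟨⟨KSconv.f_diffOn, KSconv.f_zero, KSconv.deriv_f_zero⟩, ?_⟩,
    ⟨by norm_num, ?_, ?_, ?_, ?_⟩, ?_⟩
  · intro z hz
    exact KSconv.re_convexQuot_pos (mem_ball_zero_iff.mp hz)
  · intro w hw
    have hw' : ‖w‖ < 1/10 := mem_ball_zero_iff.mp hw
    exact ⟨mem_ball_zero_iff.mpr (KSconv.g_in_ball hw'), KSconv.f_inverts_g hw'⟩
  · intro w hw
    exact KSconv.hasSum_g (mem_ball_zero_iff.mp hw)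
  · simp [KSconv.Ac, KSconv.q0]
  · simp [KSconv.Ac, KSconv.q1]
  · exact KSconv.abs_Ac hn
end

section
/- If f is strongly convex of order β (0 < β ≤ 1), then |a_2| ≤ β, and this bound is sharp. -/
open Complex Metric

open Set Filter
open scoped Topology

lemma deriv_bound_of_sector (β : ℝ) (hβ0 : 0 < β) (hβ1 : β ≤ 1) (q : ℂ → ℂ)
    (hq : DifferentiableOn ℂ q (ball 0 1)) (hq0 : q 0 = 1)
    (harg : ∀ z ∈ ball (0:ℂ) 1, |arg (q z)| ≤ β * Real.pi / 2) :
    ‖deriv q 0‖ ≤ 2 * β := by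
  have h0mem : (0:ℂ) ∈ ball (0:ℂ) 1 := by simp
  have hπ : (0:ℝ) < Real.pi := Real.pi_pos
  have hre : ∀ z ∈ ball (0:ℂ) 1, 0 ≤ (q z).re := by
    intro z hz
    exact abs_arg_le_pi_div_two_iff.mp ((harg z hz).trans (by nlinarith))
  have hqa : AnalyticOnNhd ℂ q (ball 0 1) := hq.analyticOnNhd isOpen_ball
  have hne : ∀ z ∈ ball (0:ℂ) 1, q z ≠ 0 := by
    intro z hz h0
    rcases (hqa z hz).eventually_constant_or_nhds_le_map_nhds with hc | hm
    · have heq : q =ᶠ[𝓝 z] 0 := by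
        filter_upwards [hc] with w hw
        simp [hw, h0]
      have := hqa.eqOn_zero_of_preconnected_of_eventuallyEq_zero
        (convex_ball (0:ℂ) 1).isPreconnected hz heq h0mem
      rw [hq0] at this
      exact one_ne_zero this
    · have himg : q '' (ball 0 1) ∈ map q (𝓝 z) :=
        image_mem_map (isOpen_ball.mem_nhds hz)
      rw [h0] at hm
      have h2 : q '' ball 0 1 ∈ 𝓝 (0:ℂ) := hm himg
      obtain ⟨ε, hε, hsub⟩ := Metric.mem_nhds_iff.mp h2
      have hmem : (-(ε/2 : ℝ) : ℂ) ∈ Metric.ball (0:ℂ) ε := by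
        simp only [mem_ball_zero_iff]
        rw [norm_neg, Complex.norm_real, Real.norm_eq_abs, abs_of_pos (by linarith)]
        linarith
      obtain ⟨w, hw, hwq⟩ := hsub hmem
      have : 0 ≤ (q w).re := hre w hw
      rw [hwq] at this
      simp at this
      linarith
  have hslit : ∀ z ∈ ball (0:ℂ) 1, q z ∈ Complex.slitPlane := by
    intro z hz
    rw [Complex.mem_slitPlane_iff]
    rcases (hre z hz).lt_or_eq with h | h
    · exact Or.inl h
    · refine Or.inr fun him => hne z hz ?_
      exact Complex.ext (by simp [← h]) (by simp [← him])
  set ω : ℂ → ℂ := fun z =>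
    (Complex.exp ((β⁻¹ : ℝ) * Complex.log (q z)) - 1) /
      (Complex.exp ((β⁻¹ : ℝ) * Complex.log (q z)) + 1) with hω
  have hEre : ∀ z ∈ ball (0:ℂ) 1, 0 ≤ (Complex.exp ((β⁻¹ : ℝ) * Complex.log (q z))).re := by
    intro z hz
    rw [Complex.exp_re]
    apply mul_nonneg (Real.exp_nonneg _)
    apply Real.cos_nonneg_of_mem_Icc
    have him : ((β⁻¹ : ℝ) * Complex.log (q z)).im = β⁻¹ * arg (q z) := by
      simp [Complex.mul_im, Complex.ofReal_re, Complex.ofReal_im, Complex.log_im]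
    rw [him]
    have h1 : |β⁻¹ * arg (q z)| ≤ Real.pi / 2 := by
      rw [abs_mul, abs_of_pos (by positivity)]
      have := harg z hz
      rw [inv_mul_le_iff₀ hβ0]
      calc |arg (q z)| ≤ β * Real.pi / 2 := this
        _ = β * (Real.pi / 2) := by ring
    constructor
    · linarith [neg_abs_le (β⁻¹ * arg (q z))]
    · linarith [le_abs_self (β⁻¹ * arg (q z))]
  have hEne : ∀ z ∈ ball (0:ℂ) 1,
      Complex.exp ((β⁻¹ : ℝ) * Complex.log (q z)) + 1 ≠ 0 := by
    intro z hz h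
    have := congrArg Complex.re h
    simp only [Complex.add_re, Complex.one_re, Complex.zero_re] at this
    linarith [hEre z hz]
  have hωd : DifferentiableOn ℂ ω (ball 0 1) := by
    have hE : DifferentiableOn ℂ
        (fun z => Complex.exp ((β⁻¹ : ℝ) * Complex.log (q z))) (ball 0 1) :=
      (((hq.clog hslit).const_mul _).cexp)
    exact (hE.sub (differentiableOn_const 1)).div
      (hE.add (differentiableOn_const 1)) hEne
  have hω0 : ω 0 = 0 := by
    simp [hω, hq0, Complex.log_one]
  have hωle : ∀ z ∈ ball (0:ℂ) 1, ‖ω z‖ ≤ 1 := by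
    intro z hz
    set E := Complex.exp ((β⁻¹ : ℝ) * Complex.log (q z))
    have hre' : 0 ≤ E.re := hEre z hz
    have h1 : ‖E - 1‖ ≤ ‖E + 1‖ := by
      have e1 : ‖E - 1‖ ^ 2 ≤ ‖E + 1‖ ^ 2 := by
        rw [Complex.sq_norm, Complex.sq_norm, Complex.normSq_apply, Complex.normSq_apply]
        simp only [Complex.sub_re, Complex.add_re, Complex.sub_im, Complex.add_im,
          Complex.one_re, Complex.one_im]
        nlinarith
      nlinarith [norm_nonneg (E - 1),
        norm_nonneg (E + 1)]
    rw [hω]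
    simp only [norm_div]
    exact div_le_one_of_le₀ h1 (norm_nonneg _)
  have hd1 : ∀ ε : ℝ, 0 < ε → ‖deriv ω 0‖ ≤ 1 + ε := by
    intro ε hε
    have := Complex.norm_deriv_le_div_of_mapsTo_ball hωd
      (fun z hz => by
        rw [mem_closedBall, hω0]
        calc dist (ω z) 0 = ‖ω z‖ := by
              simp [Complex.dist_eq]
          _ ≤ 1 := hωle z hz
          _ ≤ 1 + ε := by linarith) one_pos
    simpa using this
  have hωderiv : ‖deriv ω 0‖ ≤ 1 := by
    by_contra h
    push_neg at h
    have := hd1 ((‖deriv ω 0‖ - 1)/2) (by linarith)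
    linarith
  -- compute deriv ω 0
  have hd0 : DifferentiableAt ℂ q 0 := hq.differentiableAt (isOpen_ball.mem_nhds h0mem)
  set d := deriv q 0 with hd
  have h1 : HasDerivAt q d 0 := hd0.hasDerivAt
  have h2 : HasDerivAt (fun z => Complex.log (q z)) (d / q 0) 0 := h1.clog (hslit 0 h0mem)
  have h3 : HasDerivAt (fun z => ((β⁻¹ : ℝ) : ℂ) * Complex.log (q z))
      (((β⁻¹ : ℝ) : ℂ) * (d / q 0)) 0 := h2.const_mul _
  have h4 : HasDerivAt (fun z => Complex.exp (((β⁻¹ : ℝ) : ℂ) * Complex.log (q z)))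
      (Complex.exp (((β⁻¹ : ℝ) : ℂ) * Complex.log (q 0)) * (((β⁻¹ : ℝ) : ℂ) * (d / q 0))) 0 :=
    h3.cexp
  have hE0 : Complex.exp (((β⁻¹ : ℝ) : ℂ) * Complex.log (q 0)) = 1 := by
    rw [hq0, Complex.log_one, mul_zero, Complex.exp_zero]
  rw [hE0, hq0, div_one, one_mul] at h4
  have h6 := (h4.sub_const 1).div (h4.add_const 1) (hEne 0 h0mem)
  have hderiv : deriv ω 0 = ((β⁻¹ : ℝ) : ℂ) * d / 2 := by
    rw [(show HasDerivAt ω _ 0 from h6).deriv, hE0]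
    field_simp
    ring
  rw [hderiv] at hωderiv
  have habs : ‖((β⁻¹ : ℝ) : ℂ) * d / 2‖ = β⁻¹ * ‖d‖ / 2 := by
    rw [norm_div, norm_mul]
    rw [Complex.norm_real, Real.norm_eq_abs, abs_inv, abs_of_pos hβ0, Complex.norm_two]
  rw [habs] at hωderiv
  have hβi : β * β⁻¹ = 1 := mul_inv_cancel₀ hβ0.ne'
  nlinarith [hωderiv, hβ0, norm_nonneg d]

lemma deriv_ne_zero_of_convexQuot (f : ℂ → ℂ) (hf : DifferentiableOn ℂ f (ball 0 1))
    (h1 : deriv f 0 = 1)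
    (hre : ∀ z ∈ ball (0:ℂ) 1, 0 ≤ (convexQuot f z).re) :
    ∀ z ∈ ball (0:ℂ) 1, deriv f z ≠ 0 := by
  by_contra h
  push_neg at h
  obtain ⟨z₀, hz₀, hf0⟩ := h
  have h0mem : (0:ℂ) ∈ ball (0:ℂ) 1 := by simp
  have hz₀0 : z₀ ≠ 0 := by
    rintro rfl
    rw [h1] at hf0
    exact one_ne_zero hf0
  have hfa : AnalyticOnNhd ℂ f (ball 0 1) := hf.analyticOnNhd isOpen_ball
  have hf'a : AnalyticOnNhd ℂ (deriv f) (ball 0 1) := hfa.deriv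
  set W : ℂ → ℂ := fun z => z * deriv f z with hW
  have hWd : ∀ z ∈ ball (0:ℂ) 1, HasDerivAt W (deriv f z + z * deriv (deriv f) z) z := by
    intro z hz
    have := (hasDerivAt_id z).mul ((hf'a z hz).differentiableAt.hasDerivAt)
    exact this.congr_deriv (by simp)
  -- key positivity
  have key : ∀ z ∈ ball (0:ℂ) 1,
      0 ≤ (z * (deriv f z + z * deriv (deriv f) z) * (starRingEnd ℂ) (W z)).re := by
    intro z hz
    by_cases hfz : deriv f z = 0
    · simp [hW, hfz]
    · have hquot : convexQuot f z = (deriv f z + z * deriv (deriv f) z) / deriv f z := by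
        rw [convexQuot]
        field_simp
      have hre' := hre z hz
      rw [hquot] at hre'
      set A := deriv f z + z * deriv (deriv f) z
      have hexp : z * A * (starRingEnd ℂ) (W z)
          = (A / deriv f z) * ((Complex.normSq (deriv f z) : ℝ) * (Complex.normSq z : ℝ)) := by
        rw [hW]
        simp only [map_mul]
        rw [← Complex.mul_conj, ← Complex.mul_conj]
        field_simp
      rw [hexp]
      rw [← Complex.ofReal_mul]
      rw [Complex.mul_re, Complex.ofReal_re, Complex.ofReal_im]
      simp only [mul_zero, sub_zero]
      exact mul_nonneg hre' (mul_nonneg (Complex.normSq_nonneg _) (Complex.normSq_nonneg _))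
  -- the ray
  set R : ℝ := ‖z₀‖ with hR
  have hR0 : 0 < R := by
    rw [hR]
    exact norm_pos_iff.mpr hz₀0
  have hR1 : R < 1 := mem_ball_zero_iff.mp hz₀
  set u : ℂ := z₀ / (R : ℂ) with hu
  have huabs : ‖u‖ = 1 := by
    rw [hu, norm_div, Complex.norm_real, Real.norm_eq_abs, abs_of_pos hR0]
    exact div_self hR0.ne'
  have hRne : (R : ℂ) ≠ 0 := by exact_mod_cast hR0.ne'
  have hRu : (R : ℂ) * u = z₀ := by
    rw [hu, mul_comm, div_mul_cancel₀ _ hRne]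
  have hmem : ∀ t : ℝ, |t| ≤ R → ((t:ℂ) * u) ∈ ball (0:ℂ) 1 := by
    intro t ht
    rw [mem_ball_zero_iff]
    rw [norm_mul, huabs, mul_one,
      Complex.norm_real, Real.norm_eq_abs]
    linarith
  set g : ℝ → ℂ := fun t => W ((t:ℂ) * u) with hg
  set m : ℝ → ℝ := fun t => Complex.normSq (g t) with hm
  set D : ℝ → ℂ := fun t =>
    (deriv f ((t:ℂ)*u) + ((t:ℂ)*u) * deriv (deriv f) ((t:ℂ)*u)) * u with hD
  have hgd : ∀ t : ℝ, |t| ≤ R → HasDerivAt g (D t) t := by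
    intro t ht
    have h1' : HasDerivAt (fun w : ℂ => W (w * u)) (D t) ((t:ℂ)) := by
      have hin := hmem t ht
      have := (hWd _ hin).comp (t:ℂ) ((hasDerivAt_id (t:ℂ)).mul_const u)
      exact this.congr_deriv (by simp [hD])
    exact h1'.comp_ofReal
  have hm_eq : m = fun t => (g t).re * (g t).re + (g t).im * (g t).im :=
    funext fun t => Complex.normSq_apply _
  have hmd : ∀ t : ℝ, |t| ≤ R →
      HasDerivAt m (2 * ((g t).re * (D t).re + (g t).im * (D t).im)) t := by
    intro t ht
    have hgre : HasDerivAt (fun t : ℝ => (g t).re) (D t).re t :=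
      (Complex.reCLM.hasFDerivAt.comp_hasDerivAt t (hgd t ht))
    have hgim : HasDerivAt (fun t : ℝ => (g t).im) (D t).im t :=
      (Complex.imCLM.hasFDerivAt.comp_hasDerivAt t (hgd t ht))
    have h2 := ((hgre.mul hgre).add (hgim.mul hgim))
    rw [hm_eq]
    exact h2.congr_deriv (by ring)
  have hmono : MonotoneOn m (Icc 0 R) := by
    apply monotoneOn_of_deriv_nonneg (convex_Icc 0 R)
    · intro t ht
      have ht' : |t| ≤ R := by
        rw [_root_.abs_of_nonneg ht.1]; exact ht.2
      exact (hmd t ht').continuousAt.continuousWithinAt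
    · intro t ht
      rw [interior_Icc] at ht
      have ht' : |t| ≤ R := by
        rw [_root_.abs_of_nonneg ht.1.le]; exact ht.2.le
      exact (hmd t ht').differentiableAt.differentiableWithinAt
    · intro t ht
      rw [interior_Icc] at ht
      have ht' : |t| ≤ R := by
        rw [_root_.abs_of_nonneg ht.1.le]; exact ht.2.le
      rw [(hmd t ht').deriv]
      have hkey := key ((t:ℂ)*u) (hmem t ht')
      have hexpand : (((t:ℂ)*u) * (deriv f ((t:ℂ)*u) + ((t:ℂ)*u) * deriv (deriv f) ((t:ℂ)*u))
          * (starRingEnd ℂ) (W ((t:ℂ)*u)))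
          = (t : ℂ) * ((starRingEnd ℂ) (g t) * D t) := by
        rw [hg, hD]
        ring
      rw [hexpand] at hkey
      rw [Complex.re_ofReal_mul] at hkey
      have h3 : 0 ≤ ((starRingEnd ℂ) (g t) * D t).re := by
        by_contra hneg
        push_neg at hneg
        have := mul_neg_of_pos_of_neg ht.1 hneg
        linarith
      have h4 : ((starRingEnd ℂ) (g t) * D t).re
          = (g t).re * (D t).re + (g t).im * (D t).im := by
        simp [Complex.mul_re, Complex.conj_re, Complex.conj_im]
      rw [h4] at h3
      linarith
  have hmR : m R = 0 := by
    show Complex.normSq (W ((R:ℂ) * u)) = 0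
    rw [hRu]
    simp [hW, hf0]
  have hzero : ∀ t : ℝ, t ∈ Ioc (0:ℝ) R → deriv f ((t:ℂ)*u) = 0 := by
    intro t ht
    have ht' : t ∈ Icc (0:ℝ) R := ⟨ht.1.le, ht.2⟩
    have hle : m t ≤ m R := hmono ht' (right_mem_Icc.2 hR0.le) ht.2
    rw [hmR] at hle
    have hge : 0 ≤ m t := Complex.normSq_nonneg _
    have : Complex.normSq (g t) = 0 := le_antisymm hle hge
    have hg0 : g t = 0 := Complex.normSq_eq_zero.mp this
    rw [hg, hW] at hg0
    have htu : ((t:ℂ)*u) ≠ 0 := by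
      apply mul_ne_zero
      · exact_mod_cast ht.1.ne'
      · intro hu0
        rw [hu0] at huabs
        simp at huabs
    exact (mul_eq_zero.mp hg0).resolve_left htu
  have hcont : ContinuousAt (deriv f) 0 := (hf'a 0 h0mem).continuousAt
  have htend : Tendsto (fun t : ℝ => deriv f ((t:ℂ)*u)) (𝓝[>] (0:ℝ)) (𝓝 (deriv f 0)) := by
    have h5 : Tendsto (fun t : ℝ => ((t:ℂ)*u)) (𝓝[>] (0:ℝ)) (𝓝 (0:ℂ)) := by
      have h6 : Continuous (fun t : ℝ => (t:ℂ) * u) :=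
        Complex.continuous_ofReal.mul continuous_const
      have := h6.tendsto 0
      simpa using this.mono_left nhdsWithin_le_nhds
    exact hcont.tendsto.comp h5
  have heq : (fun t : ℝ => deriv f ((t:ℂ)*u)) =ᶠ[𝓝[>] (0:ℝ)] (fun _ => (0:ℂ)) := by
    filter_upwards [Ioc_mem_nhdsGT_of_mem (α := ℝ) ⟨le_refl 0, hR0⟩] with t ht
    exact hzero t ht
  have hlim : deriv f 0 = 0 := tendsto_nhds_unique (htend.congr' heq) tendsto_const_nhds
  rw [h1] at hlim
  exact one_ne_zero hlim

lemma exists_primitive_ball {g : ℂ → ℂ} (hg : DifferentiableOn ℂ g (ball 0 1)) :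
    ∃ G : ℂ → ℂ, G 0 = 0 ∧ ∀ z ∈ ball (0:ℂ) 1, HasDerivAt G (g z) z := by
  set c : ℕ → ℂ := fun n => ((n.factorial : ℕ) : ℂ)⁻¹ * iteratedDeriv n g 0 with hc
  have hsum : ∀ z ∈ ball (0:ℂ) 1, HasSum (fun n => c n * z ^ n) (g z) := by
    intro z hz
    have h := Complex.hasSum_taylorSeries_on_ball hg hz
    refine h.congr_fun fun n => ?_
    simp only [hc, smul_eq_mul, sub_zero]
    ring
  refine ⟨fun z => ∑' n, c n / ((n:ℂ)+1) * z ^ (n+1), by simp, ?_⟩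
  intro z hz
  obtain ⟨r, hzr, hr1⟩ := exists_between (mem_ball_zero_iff.mp hz)
  obtain ⟨ρ, hrρ, hρ1⟩ := exists_between hr1
  have hr0 : 0 < r := lt_of_le_of_lt (norm_nonneg z) hzr
  have hρ0 : 0 < ρ := hr0.trans hrρ
  have hρball : ((ρ:ℂ)) ∈ ball (0:ℂ) 1 := by
    rw [mem_ball_zero_iff, Complex.norm_real, Real.norm_eq_abs, abs_of_pos hρ0]
    exact hρ1
  -- coefficient bound
  have hsummable : Summable (fun n => c n * (ρ:ℂ) ^ n) := (hsum _ hρball).summable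
  have htend : Tendsto (fun n => ‖c n * (ρ:ℂ) ^ n‖) atTop (𝓝 0) := by
    have := hsummable.tendsto_atTop_zero
    simpa using this.norm
  have hbdd : BddAbove (Set.range fun n => ‖c n * (ρ:ℂ) ^ n‖) := htend.bddAbove_range
  obtain ⟨C, hC⟩ := hbdd
  have hCb : ∀ n, ‖c n‖ * ρ ^ n ≤ C := by
    intro n
    have := hC (Set.mem_range_self n)
    rwa [norm_mul, norm_pow, Complex.norm_real, Real.norm_eq_abs, abs_of_pos hρ0] at this
  have hC0 : 0 ≤ C := le_trans (by positivity) (hCb 0)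
  -- apply the series differentiation theorem
  have key := hasDerivAt_tsum_of_isPreconnected
    (u := fun n => C * (r/ρ) ^ n)
    (g := fun n w => c n / ((n:ℂ)+1) * w ^ (n+1))
    (g' := fun n w => c n * w ^ n)
    (t := ball (0:ℂ) r) (y₀ := 0) (𝕜 := ℂ)
    ?_ isOpen_ball (convex_ball (0:ℂ) r).isPreconnected ?_ ?_
    (by simp [hr0]) ?_ (by rwa [mem_ball_zero_iff])
  · rw [(hsum z hz).tsum_eq] at key
    exact key
  · apply Summable.mul_left
    apply summable_geometric_of_lt_one (by positivity)
    rw [div_lt_one hρ0]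
    exact hrρ
  · intro n y _
    have hne : ((n:ℂ) + 1) ≠ 0 := Nat.cast_add_one_ne_zero n
    have := (hasDerivAt_pow (n+1) y).const_mul (c n / ((n:ℂ)+1))
    exact this.congr_deriv (by rw [Nat.add_sub_cancel]; push_cast; rw [← mul_assoc, div_mul_cancel₀ _ hne])
  · intro n y hy
    rw [norm_mul, norm_pow]
    have hyr : ‖y‖ ≤ r := le_of_lt (mem_ball_zero_iff.mp hy)
    calc ‖c n‖ * ‖y‖ ^ n ≤ ‖c n‖ * r ^ n := by
          apply mul_le_mul_of_nonneg_left _ (norm_nonneg _)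
          exact pow_le_pow_left₀ (norm_nonneg y) hyr n
      _ = (‖c n‖ * ρ ^ n) * (r/ρ) ^ n := by
          rw [div_pow, mul_assoc, mul_div_assoc']
          congr 1
          rw [mul_comm, mul_div_assoc, div_self (by positivity), mul_one]
      _ ≤ C * (r/ρ) ^ n := by
          apply mul_le_mul_of_nonneg_right (hCb n) (by positivity)
  · have : (fun n : ℕ => c n / ((n:ℂ)+1) * (0:ℂ) ^ (n+1)) = fun _ => (0:ℂ) := by
      funext n
      simp
    rw [this]
    exact summable_zero

lemma coeff_two_eq (f : ℂ → ℂ) (a : ℕ → ℂ)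
    (hsum : ∀ z ∈ ball (0 : ℂ) 1, HasSum (fun n : ℕ => a n * z ^ n) (f z)) :
    (2:ℂ) * a 2 = deriv (deriv f) 0 := by
  set p := FormalMultilinearSeries.ofScalars ℂ a with hp
  -- coefficient bound at 3/4
  have hρball : (((3/4 : ℝ)):ℂ) ∈ ball (0:ℂ) 1 := by
    rw [mem_ball_zero_iff, Complex.norm_real, Real.norm_eq_abs]
    rw [abs_of_pos (by norm_num)]
    norm_num
  have hsummable := (hsum _ hρball).summable
  have htend : Tendsto (fun n => ‖a n * (((3/4:ℝ)):ℂ) ^ n‖) atTop (𝓝 0) := by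
    have := hsummable.tendsto_atTop_zero
    simpa using this.norm
  obtain ⟨C, hC⟩ := htend.bddAbove_range
  have hCb : ∀ n, ‖a n‖ * (3/4:ℝ) ^ n ≤ C := by
    intro n
    have := hC (Set.mem_range_self n)
    rwa [norm_mul, norm_pow, Complex.norm_real, Real.norm_eq_abs,
      abs_of_pos (by norm_num : (0:ℝ) < 3/4)] at this
  have hps : HasFPowerSeriesOnBall f p 0 ((1/2 : NNReal) : ENNReal) := by
    refine ⟨?_, by norm_num, ?_⟩
    · apply p.le_radius_of_bound C
      intro n
      rw [hp, FormalMultilinearSeries.ofScalars_norm]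
      calc ‖a n‖ * ((1/2 : NNReal) : ℝ) ^ n ≤ ‖a n‖ * (3/4:ℝ) ^ n := by
            apply mul_le_mul_of_nonneg_left _ (norm_nonneg _)
            apply pow_le_pow_left₀ (by norm_num)
            norm_num
        _ ≤ C := hCb n
    · intro y hy
      rw [Metric.emetric_ball_nnreal] at hy
      have hy1 : y ∈ ball (0:ℂ) 1 := by
        rw [mem_ball_zero_iff]
        have := mem_ball_zero_iff.mp hy
        have h2 : ((1/2 : NNReal) : ℝ) = 1/2 := by norm_num
        rw [h2] at this
        linarith
      have := hsum y hy1
      rw [zero_add]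
      refine this.congr_fun fun n => ?_
      rw [hp, FormalMultilinearSeries.ofScalars_apply_eq, smul_eq_mul]
  have h2 := hps.factorial_smul (1:ℂ) 2
  rw [hp, FormalMultilinearSeries.ofScalars_apply_eq, smul_eq_mul] at h2
  rw [← iteratedDeriv_eq_iteratedFDeriv] at h2
  have h3 : iteratedDeriv 2 f 0 = deriv (deriv f) 0 := by
    rw [show (2:ℕ) = 1 + 1 from rfl, iteratedDeriv_succ, iteratedDeriv_one]
  rw [h3] at h2
  rw [← h2, nsmul_eq_mul]
  norm_num [Nat.factorial]

lemma part1 (β : ℝ) (hβ0 : 0 < β) (hβ1 : β ≤ 1) (f : ℂ → ℂ) (a : ℕ → ℂ)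
    (hsc : IsStronglyConvex β f) (hco : HasCoeffs f a) : ‖a 2‖ ≤ β := by
  obtain ⟨⟨hfd, hf0, hf'0⟩, harg⟩ := hsc
  obtain ⟨hsum, ha0, ha1⟩ := hco
  have h0mem : (0:ℂ) ∈ ball (0:ℂ) 1 := by simp
  have hre : ∀ z ∈ ball (0:ℂ) 1, 0 ≤ (convexQuot f z).re := by
    intro z hz
    exact abs_arg_le_pi_div_two_iff.mp ((harg z hz).trans (by nlinarith [Real.pi_pos]))
  have hne := deriv_ne_zero_of_convexQuot f hfd hf'0 hre
  have hfa : AnalyticOnNhd ℂ f (ball 0 1) := hfd.analyticOnNhd isOpen_ball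
  have hf'a : AnalyticOnNhd ℂ (deriv f) (ball 0 1) := hfa.deriv
  have hf''a : AnalyticOnNhd ℂ (deriv (deriv f)) (ball 0 1) := hf'a.deriv
  have hconv : convexQuot f = fun z => 1 + z * deriv (deriv f) z / deriv f z := rfl
  have hqd : DifferentiableOn ℂ (convexQuot f) (ball 0 1) := by
    rw [hconv]
    exact (differentiableOn_const 1).add
      ((differentiableOn_id.mul hf''a.differentiableOn).div hf'a.differentiableOn hne)
  have hq0 : convexQuot f 0 = 1 := by simp [convexQuot]
  have habs := deriv_bound_of_sector β hβ0 hβ1 _ hqd hq0 harg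
  -- compute deriv (convexQuot f) 0
  have hA : HasDerivAt (fun z : ℂ => z * deriv (deriv f) z)
      (1 * deriv (deriv f) 0 + 0 * deriv (deriv (deriv f)) 0) 0 :=
    (hasDerivAt_id 0).mul ((hf''a 0 h0mem).differentiableAt.hasDerivAt)
  have hB : HasDerivAt (deriv f) (deriv (deriv f) 0) 0 :=
    (hf'a 0 h0mem).differentiableAt.hasDerivAt
  have hq := (hA.div hB (hne 0 h0mem)).const_add 1
  have hqder : deriv (convexQuot f) 0 = deriv (deriv f) 0 := by
    rw [hconv, (show HasDerivAt (fun z => 1 + z * deriv (deriv f) z / deriv f z) _ 0 from hq).deriv]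
    rw [hf'0]
    simp
  rw [hqder] at habs
  have hcoeff := coeff_two_eq f a hsum
  rw [← hcoeff] at habs
  rw [norm_mul, Complex.norm_two] at habs
  linarith

lemma part2 (β : ℝ) (hβ0 : 0 < β) (hβ1 : β ≤ 1) :
    ∃ f : ℂ → ℂ, ∃ a : ℕ → ℂ, IsStronglyConvex β f ∧ HasCoeffs f a ∧
      ‖a 2‖ = β := by
  have h0mem : (0:ℂ) ∈ ball (0:ℂ) 1 := by simp
  have hπ := Real.pi_pos
  set M : ℂ → ℂ := fun z => (1 + z) / (1 - z) with hM
  have hden : ∀ z ∈ ball (0:ℂ) 1, (1 : ℂ) - z ≠ 0 := by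
    intro z hz h
    have : z = 1 := by linear_combination -h
    rw [this] at hz
    simp at hz
  have hMre : ∀ z ∈ ball (0:ℂ) 1, 0 < (M z).re := by
    intro z hz
    have hn : 0 < Complex.normSq (1 - z) := Complex.normSq_pos.mpr (hden z hz)
    have hz2 : z.re * z.re + z.im * z.im < 1 := by
      have hb := mem_ball_zero_iff.mp hz
      have h2 : Complex.normSq z < 1 := by
        rw [← Complex.sq_norm]
        nlinarith [norm_nonneg z]
      rwa [Complex.normSq_apply] at h2
    rw [hM]
    simp only
    rw [Complex.div_re]
    have h1re : (1 + z).re = 1 + z.re := by simp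
    have h1im : (1 + z).im = z.im := by simp
    have h2re : (1 - z).re = 1 - z.re := by simp
    have h2im : (1 - z).im = -z.im := by simp
    rw [h1re, h1im, h2re, h2im]
    have heq : (1 + z.re) * (1 - z.re) / Complex.normSq (1 - z)
        + z.im * -z.im / Complex.normSq (1 - z)
        = (1 - (z.re * z.re + z.im * z.im)) / Complex.normSq (1 - z) := by
      field_simp
      ring
    rw [heq]
    exact div_pos (by linarith) hn
  have hMslit : ∀ z ∈ ball (0:ℂ) 1, M z ∈ Complex.slitPlane := by
    intro z hz
    exact Complex.mem_slitPlane_iff.mpr (Or.inl (hMre z hz))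
  have hMd : DifferentiableOn ℂ M (ball 0 1) := by
    apply DifferentiableOn.div
    · exact (differentiableOn_const 1).add differentiableOn_id
    · exact (differentiableOn_const 1).sub differentiableOn_id
    · exact hden
  set q : ℂ → ℂ := fun z => Complex.exp ((β : ℂ) * Complex.log (M z)) with hq
  have hqd : DifferentiableOn ℂ q (ball 0 1) := ((hMd.clog hMslit).const_mul _).cexp
  have hM0 : M 0 = 1 := by rw [hM]; simp
  have hq0 : q 0 = 1 := by rw [hq]; simp [hM0]
  have hargM : ∀ z ∈ ball (0:ℂ) 1, |arg (M z)| ≤ Real.pi / 2 := by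
    intro z hz
    exact abs_arg_le_pi_div_two_iff.mpr (hMre z hz).le
  have hargq : ∀ z ∈ ball (0:ℂ) 1, |arg (q z)| ≤ β * Real.pi / 2 := by
    intro z hz
    have him : ((β : ℂ) * Complex.log (M z)).im = β * arg (M z) := by
      rw [Complex.im_ofReal_mul, Complex.log_im]
    have habs : |β * arg (M z)| ≤ β * Real.pi / 2 := by
      rw [abs_mul, abs_of_pos hβ0]
      have := hargM z hz
      calc β * |arg (M z)| ≤ β * (Real.pi / 2) := by
            apply mul_le_mul_of_nonneg_left this hβ0.le
        _ = β * Real.pi / 2 := by ring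
    have hlim1 : -Real.pi < ((β : ℂ) * Complex.log (M z)).im := by
      rw [him]
      nlinarith [neg_abs_le (β * arg (M z))]
    have hlim2 : ((β : ℂ) * Complex.log (M z)).im ≤ Real.pi := by
      rw [him]
      nlinarith [le_abs_self (β * arg (M z))]
    have hargeq : arg (q z) = ((β : ℂ) * Complex.log (M z)).im := by
      rw [hq]
      simp only
      rw [← Complex.log_im (Complex.exp ((β : ℂ) * Complex.log (M z)))]
      rw [Complex.log_exp hlim1 hlim2]
    rw [hargeq, him]
    exact habs
  -- build f
  set φ : ℂ → ℂ := dslope q 0 with hφ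
  have hφd : DifferentiableOn ℂ φ (ball 0 1) :=
    (Complex.differentiableOn_dslope (isOpen_ball.mem_nhds h0mem)).mpr hqd
  obtain ⟨g₁, hg10, hg1d⟩ := exists_primitive_ball hφd
  have hg1diff : DifferentiableOn ℂ g₁ (ball 0 1) := fun z hz =>
    ((hg1d z hz).differentiableAt).differentiableWithinAt
  have hE : DifferentiableOn ℂ (fun z => Complex.exp (g₁ z)) (ball 0 1) := hg1diff.cexp
  obtain ⟨f, hf0, hfd'⟩ := exists_primitive_ball hE
  have hfdiff : DifferentiableOn ℂ f (ball 0 1) := fun z hz =>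
    ((hfd' z hz).differentiableAt).differentiableWithinAt
  have hderiv1 : ∀ z ∈ ball (0:ℂ) 1, deriv f z = Complex.exp (g₁ z) := fun z hz =>
    (hfd' z hz).deriv
  have hf'0 : deriv f 0 = 1 := by rw [hderiv1 0 h0mem, hg10, Complex.exp_zero]
  have hderiv2 : ∀ z ∈ ball (0:ℂ) 1,
      deriv (deriv f) z = Complex.exp (g₁ z) * φ z := by
    intro z hz
    have hev : deriv f =ᶠ[𝓝 z] fun w => Complex.exp (g₁ w) := by
      filter_upwards [isOpen_ball.mem_nhds hz] with w hw using hderiv1 w hw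
    rw [hev.deriv_eq]
    exact ((hg1d z hz).cexp).deriv
  have hconvex : ∀ z ∈ ball (0:ℂ) 1, convexQuot f z = q z := by
    intro z hz
    rw [convexQuot, hderiv2 z hz, hderiv1 z hz]
    have hexpne := Complex.exp_ne_zero (g₁ z)
    have hfp : z * (Complex.exp (g₁ z) * φ z) / Complex.exp (g₁ z) = z * φ z := by
      field_simp
    rw [hfp]
    by_cases hz0 : z = 0
    · rw [hz0, hq0]
      simp
    · have hφz : φ z = (q z - 1) / z := by
        rw [hφ, dslope_of_ne _ hz0, slope_def_field, hq0, sub_zero]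
      rw [hφz]
      field_simp
      ring
  -- deriv q 0
  have hMder : HasDerivAt M 2 0 := by
    have hnum : HasDerivAt (fun z : ℂ => 1 + z) 1 0 := (hasDerivAt_id 0).const_add 1
    have hden' : HasDerivAt (fun z : ℂ => 1 - z) (-1) 0 := (hasDerivAt_id 0).const_sub 1
    have := hnum.div hden' (hden 0 h0mem)
    exact (show HasDerivAt M _ 0 from this).congr_deriv (by norm_num)
  have hlogM : HasDerivAt (fun z => Complex.log (M z)) (2 / M 0) 0 :=
    hMder.clog (hMslit 0 h0mem)
  have hq'0 : deriv q 0 = 2 * (β : ℂ) := by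
    have h1 : HasDerivAt (fun z => (β:ℂ) * Complex.log (M z)) ((β:ℂ) * (2 / M 0)) 0 :=
      hlogM.const_mul _
    have h2 : HasDerivAt q
        (Complex.exp ((β:ℂ) * Complex.log (M 0)) * ((β:ℂ) * (2 / M 0))) 0 := h1.cexp
    rw [h2.deriv, hM0]
    simp
    ring
  have hφ0 : φ 0 = 2 * (β:ℂ) := by
    rw [hφ, dslope_same, hq'0]
  -- coefficients
  set a : ℕ → ℂ := fun n => ((n.factorial : ℕ) : ℂ)⁻¹ * iteratedDeriv n f 0 with ha
  have hasum : ∀ z ∈ ball (0 : ℂ) 1, HasSum (fun n : ℕ => a n * z ^ n) (f z) := by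
    intro z hz
    have h := Complex.hasSum_taylorSeries_on_ball hfdiff hz
    refine h.congr_fun fun n => ?_
    simp only [ha, smul_eq_mul, sub_zero]
    ring
  have ha0 : a 0 = 0 := by simp [ha, iteratedDeriv_zero, hf0]
  have ha1 : a 1 = 1 := by simp [ha, iteratedDeriv_one, hf'0]
  have hita : iteratedDeriv 2 f 0 = deriv (deriv f) 0 := by
    rw [show (2:ℕ) = 1 + 1 from rfl, iteratedDeriv_succ, iteratedDeriv_one]
  have ha2 : a 2 = (β : ℂ) := by
    rw [ha]
    simp only
    rw [hita, hderiv2 0 h0mem, hg10, Complex.exp_zero, one_mul, hφ0]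
    norm_num [Nat.factorial]
    ring
  refine ⟨f, a, ⟨⟨hfdiff, hf0, hf'0⟩, ?_⟩, ⟨hasum, ha0, ha1⟩, ?_⟩
  · intro z hz
    rw [hconvex z hz]
    exact hargq z hz
  · rw [ha2, Complex.norm_real, Real.norm_eq_abs, abs_of_pos hβ0]

theorem strongly_convex_a2 (β : ℝ) (hβ0 : 0 < β) (hβ1 : β ≤ 1) :
    (∀ f : ℂ → ℂ, ∀ a : ℕ → ℂ, IsStronglyConvex β f → HasCoeffs f a →
      ‖a 2‖ ≤ β) ∧
    (∃ f : ℂ → ℂ, ∃ a : ℕ → ℂ, IsStronglyConvex β f ∧ HasCoeffs f a ∧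
      ‖a 2‖ = β) := ⟨fun f a hsc hco => part1 β hβ0 hβ1 f a hsc hco, part2 β hβ0 hβ1⟩
end
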